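/- Let A ∈ M_n(ℂ) be normal with at most two distinct eigenvalues. Then for every B ∈ M_n(ℂ) and every ε > 0, σ_ε([A,B]) = −σ_ε([A,B]). -/

import Mathlib

noncomputable def eNorm {n : ℕ} (v : Fin n → ℂ) : ℝ :=
  Real.sqrt (∑ i, Complex.normSq (v i))

noncomputable def sMin {n : ℕ} (M : Matrix (Fin n) (Fin n) ℂ) : ℝ :=
  sInf {r : ℝ | ∃ v : Fin n → ℂ, eNorm v = 1 ∧ r = eNorm (M.mulVec v)}

noncomputable def pseudoSpectrum {n : ℕ} (ε : ℝ) (A : Matrix (Fin n) (Fin n) ℂ) : Set ℂ :=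
  {z : ℂ | sMin (A - z • (1 : Matrix (Fin n) (Fin n) ℂ)) < ε}

section Aux

open Matrix Polynomial
open scoped ComplexOrder

open Matrix in
lemma dot_self_eq {n : ℕ} (v : Fin n → ℂ) :
    ((∑ i, Complex.normSq (v i) : ℝ) : ℂ) = star v ⬝ᵥ v := by
  push_cast
  simp [dotProduct, Complex.normSq_eq_conj_mul_self, mul_comm]

lemma eNorm_neg {n : ℕ} (v : Fin n → ℂ) : eNorm (-v) = eNorm v := by
  simp [eNorm]

open Matrix in
lemma eNorm_mulVec_unitary {n : ℕ} {W : Matrix (Fin n) (Fin n) ℂ}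
    (hW : Wᴴ * W = 1) (v : Fin n → ℂ) : eNorm (W *ᵥ v) = eNorm v := by
  unfold eNorm
  congr 1
  have h : ((∑ i, Complex.normSq ((W *ᵥ v) i) : ℝ) : ℂ)
      = ((∑ i, Complex.normSq (v i) : ℝ) : ℂ) := by
    rw [dot_self_eq, dot_self_eq, star_mulVec, ← dotProduct_mulVec, mulVec_mulVec, hW,
      one_mulVec]
  exact_mod_cast h

open Matrix in
lemma sMin_conj {n : ℕ} {W : Matrix (Fin n) (Fin n) ℂ}
    (h1 : Wᴴ * W = 1) (h2 : W * Wᴴ = 1) (M : Matrix (Fin n) (Fin n) ℂ) :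
    sMin (W * M * Wᴴ) = sMin M := by
  unfold sMin
  congr 1
  ext r
  simp only [Set.mem_setOf_eq]
  constructor
  · rintro ⟨v, hv, rfl⟩
    refine ⟨Wᴴ *ᵥ v, ?_, ?_⟩
    · rw [eNorm_mulVec_unitary (by rw [conjTranspose_conjTranspose, h2]) v] at *
      exact hv
    · rw [← mulVec_mulVec, ← mulVec_mulVec]
      rw [eNorm_mulVec_unitary h1]
  · rintro ⟨v, hv, rfl⟩
    refine ⟨W *ᵥ v, by rw [eNorm_mulVec_unitary h1 v]; exact hv, ?_⟩
    rw [← mulVec_mulVec, ← mulVec_mulVec, mulVec_mulVec v Wᴴ W, h1, one_mulVec,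
      eNorm_mulVec_unitary h1]

open Matrix in
lemma sMin_neg {n : ℕ} (M : Matrix (Fin n) (Fin n) ℂ) : sMin (-M) = sMin M := by
  unfold sMin
  congr 1
  ext r
  simp only [Set.mem_setOf_eq, neg_mulVec]
  exact ⟨fun ⟨v, hv, hr⟩ => ⟨v, hv, by rw [hr, eNorm_neg]⟩,
    fun ⟨v, hv, hr⟩ => ⟨v, hv, by rw [hr, ← eNorm_neg]⟩⟩

lemma normal_sq_eq_zero {n : ℕ} {N : Matrix (Fin n) (Fin n) ℂ}
    (hN : N * Nᴴ = Nᴴ * N) (h : N * N = 0) : N = 0 := by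
  have hsq : (N * Nᴴ) * (N * Nᴴ)ᴴ = 0 := by
    have : (N * Nᴴ)ᴴ = N * Nᴴ := by
      rw [conjTranspose_mul, conjTranspose_conjTranspose]
    rw [this]
    calc N * Nᴴ * (N * Nᴴ) = N * (Nᴴ * N) * Nᴴ := by noncomm_ring
      _ = N * (N * Nᴴ) * Nᴴ := by rw [hN]
      _ = (N * N) * (Nᴴ * Nᴴ) := by noncomm_ring
      _ = 0 := by rw [h, zero_mul]
  exact self_mul_conjTranspose_eq_zero.mp (self_mul_conjTranspose_eq_zero.mp hsq)

lemma normal_pow_eq_zero {n : ℕ} {N : Matrix (Fin n) (Fin n) ℂ}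
    (hN : N * Nᴴ = Nᴴ * N) : ∀ m : ℕ, N ^ m = 0 → N = 0 := by
  intro m
  induction m with
  | zero => intro h; rw [pow_zero] at h; calc N = N * 1 := (mul_one N).symm
              _ = N * 0 := by rw [h]
              _ = 0 := mul_zero N
  | succ m ih =>
    intro h
    rcases Nat.eq_zero_or_pos m with hm | hm
    · subst hm; simpa using h
    · apply ih
      have hc : Commute N Nᴴ := hN
      have hnm : (N ^ m) * (N ^ m)ᴴ = (N ^ m)ᴴ * (N ^ m) := by
        rw [conjTranspose_pow]
        exact (hc.pow_pow m m)
      apply normal_sq_eq_zero hnm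
      have : N ^ m * N ^ m = N ^ (m + 1) * N ^ (m - 1) := by
        rw [← pow_add, ← pow_add]
        congr 1
        omega
      rw [this, h, zero_mul]

lemma eval_charpoly' {n : ℕ} (A : Matrix (Fin n) (Fin n) ℂ) (μ : ℂ) :
    (Matrix.charpoly A).eval μ = (algebraMap ℂ (Matrix (Fin n) (Fin n) ℂ) μ - A).det := by
  rw [Matrix.charpoly, _root_.eval_det, matPolyEquiv_charmatrix]
  congr 1
  simp [Matrix.algebraMap_eq_diagonal, Matrix.scalar]

lemma root_charpoly_mem_spectrum {n : ℕ} (A : Matrix (Fin n) (Fin n) ℂ) (μ : ℂ)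
    (h : (Matrix.charpoly A).IsRoot μ) : μ ∈ spectrum ℂ A := by
  rw [spectrum.mem_iff]
  intro hu
  rw [Matrix.isUnit_iff_isUnit_det] at hu
  have : (algebraMap ℂ (Matrix (Fin n) (Fin n) ℂ) μ - A).det = 0 := by
    rw [← eval_charpoly']
    · exact h
  rw [this] at hu
  exact (by simp at hu : False)

lemma prod_linear_dvd (a b : ℂ) :
    ∀ s : Multiset ℂ, (∀ x ∈ s, x = a ∨ x = b) →
      (s.map fun r => X - C r).prod ∣ ((X - C a) * (X - C b)) ^ (Multiset.card s) := by
  intro s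
  induction s using Multiset.induction_on with
  | empty => intro _; simp
  | cons x s ih =>
    intro h
    rw [Multiset.map_cons, Multiset.prod_cons, Multiset.card_cons, pow_succ']
    apply mul_dvd_mul
    · rcases h x (Multiset.mem_cons_self x s) with rfl | rfl
      · exact dvd_mul_right _ _
      · exact dvd_mul_left _ _
    · exact ih fun y hy => h y (Multiset.mem_cons_of_mem hy)

lemma N_pow_eq_zero {n : ℕ} (A : Matrix (Fin n) (Fin n) ℂ) (a b : ℂ)
    (hspec : spectrum ℂ A ⊆ {a, b})
    (hroot : ∀ μ : ℂ, (Matrix.charpoly A).IsRoot μ → μ ∈ spectrum ℂ A) :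
    ∃ m : ℕ, ((A - algebraMap ℂ _ a) * (A - algebraMap ℂ _ b)) ^ m = 0 := by
  set p := Matrix.charpoly A with hp
  have hmonic : p.Monic := Matrix.charpoly_monic A
  have hne : p ≠ 0 := hmonic.ne_zero
  have hsplits : p.Splits := IsAlgClosed.splits p
  have hfact : p = (p.roots.map fun r => X - C r).prod := by
    conv_lhs => rw [hsplits.eq_prod_roots_of_monic hmonic]
  have hmem : ∀ x ∈ p.roots, x = a ∨ x = b := by
    intro x hx
    have : x ∈ spectrum ℂ A := hroot x (Polynomial.isRoot_of_mem_roots hx)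
    simpa using hspec this
  have hdvd : p ∣ ((X - C a) * (X - C b)) ^ (Multiset.card p.roots) := by
    conv_lhs => rw [hfact]
    exact prod_linear_dvd a b p.roots hmem
  obtain ⟨q, hq⟩ := hdvd
  refine ⟨Multiset.card p.roots, ?_⟩
  have := congrArg (Polynomial.aeval A) hq
  rw [_root_.map_mul (Polynomial.aeval A), map_pow, _root_.map_mul (Polynomial.aeval A),
    Matrix.aeval_self_charpoly, zero_mul] at this
  simpa [map_sub, Polynomial.aeval_X, Polynomial.aeval_C] using this

variable {n : ℕ}

local notation "𝕄" => Matrix (Fin n) (Fin n) ℂ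

lemma commute_algebraMap_right (c : ℂ) (X : 𝕄) : Commute X (algebraMap ℂ 𝕄 c) :=
  (Algebra.commutes c X).symm

lemma commute_shift {X Y : 𝕄} (h : Commute X Y) (c d : ℂ) :
    Commute (X - algebraMap ℂ 𝕄 c) (Y - algebraMap ℂ 𝕄 d) :=
  ((h.sub_right (commute_algebraMap_right d X)).sub_left
    (((commute_algebraMap_right c Y).symm).sub_right
      (commute_algebraMap_right d (algebraMap ℂ 𝕄 c))))

lemma conjTranspose_algebraMap (c : ℂ) :
    (algebraMap ℂ 𝕄 c)ᴴ = algebraMap ℂ 𝕄 (starRingEnd ℂ c) := by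
  simp [Matrix.algebraMap_eq_diagonal, diagonal_conjTranspose]

lemma commute_smul_both {X Y : 𝕄} (h : Commute X Y) (r s : ℂ) :
    Commute (r • X) (s • Y) := by
  unfold Commute SemiconjBy
  simp only [smul_mul_assoc, mul_smul_comm, smul_smul, h.eq, mul_comm r s]

lemma exists_involution (A : 𝕄) (hnormal : A * Aᴴ = Aᴴ * A) (a b : ℂ) (hab : a ≠ b)
    (hN : (A - algebraMap ℂ 𝕄 a) * (A - algebraMap ℂ 𝕄 b) = 0) :
    ∃ W : 𝕄, Wᴴ * W = 1 ∧ W * Wᴴ = 1 ∧ Wᴴ = W ∧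
      A = algebraMap ℂ 𝕄 ((a + b) / 2) + ((a - b) / 2) • W := by
  set ν : ℂ := (a + b) / 2 with hν
  set lam : ℂ := (a - b) / 2 with hlam
  have hlam0 : lam ≠ 0 := by
    rw [hlam]
    exact div_ne_zero (sub_ne_zero.mpr hab) two_ne_zero
  set M : 𝕄 := A - algebraMap ℂ 𝕄 ν with hM
  set W : 𝕄 := lam⁻¹ • M with hW
  have h1 : ν + ν = a + b := by rw [hν]; ring
  have h2 : ν * ν - lam * lam = a * b := by rw [hν, hlam]; ring
  have e1 : C ν + C ν = C a + C b := by rw [← C_add, ← C_add, h1]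
  have e2 : C ν * C ν - C lam * C lam = C a * C b := by
    rw [← C_mul, ← C_mul, ← C_sub, ← C_mul, h2]
  have hpoly : ((X : ℂ[X]) - C ν) * (X - C ν) - C (lam * lam)
      = ((X : ℂ[X]) - C a) * (X - C b) := by
    rw [C_mul]
    linear_combination (-(X : ℂ[X])) * e1 + e2
  have hM2 : M * M = algebraMap ℂ 𝕄 (lam * lam) := by
    have step : M * M - algebraMap ℂ 𝕄 (lam * lam)
        = (A - algebraMap ℂ 𝕄 a) * (A - algebraMap ℂ 𝕄 b) := by
      have := congrArg (Polynomial.aeval A) hpoly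
      simpa [map_sub, map_mul (Polynomial.aeval A), Polynomial.aeval_X,
        Polynomial.aeval_C, hM] using this
    have := step.trans hN
    exact sub_eq_zero.mp this
  have hWW : W * W = 1 := by
    rw [hW, smul_mul_assoc, mul_smul_comm, smul_smul, hM2,
      Algebra.algebraMap_eq_smul_one, smul_smul]
    rw [show lam⁻¹ * lam⁻¹ * (lam * lam) = 1 by field_simp]
    rw [one_smul]
  have hMH : Mᴴ = Aᴴ - algebraMap ℂ 𝕄 (starRingEnd ℂ ν) := by
    rw [hM, conjTranspose_sub, conjTranspose_algebraMap]
  have hMnormal : Commute M Mᴴ := by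
    rw [hMH, hM]
    exact commute_shift hnormal ν _
  have hWH : Wᴴ = (starRingEnd ℂ lam⁻¹) • Mᴴ := by
    rw [hW, conjTranspose_smul]
    rfl
  have hWnormal : Commute W Wᴴ := by
    rw [hW, hWH]
    exact commute_smul_both hMnormal _ _
  have hHH : Wᴴ * Wᴴ = 1 := by
    rw [← conjTranspose_mul]
    rw [hWW, conjTranspose_one]
  have hP2 : (W * Wᴴ) * (W * Wᴴ) = 1 := by
    calc (W * Wᴴ) * (W * Wᴴ) = W * ((Wᴴ * W) * Wᴴ) := by noncomm_ring
      _ = W * ((W * Wᴴ) * Wᴴ) := by rw [hWnormal.symm.eq]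
      _ = (W * W) * (Wᴴ * Wᴴ) := by noncomm_ring
      _ = 1 := by rw [hWW, hHH, one_mul]
  have hP : W * Wᴴ = 1 := by
    have hpsd : (W * Wᴴ).PosSemidef := posSemidef_self_mul_conjTranspose W
    have h1psd : (1 : 𝕄).PosSemidef := Matrix.PosSemidef.one
    have hu : IsUnit (W * Wᴴ + 1) := (Matrix.PosDef.one.posSemidef_add hpsd).isUnit
    have hz : (W * Wᴴ - 1) * (W * Wᴴ + 1) = 0 := by
      rw [sub_mul, mul_add, mul_add, hP2, mul_one, one_mul, one_mul]; abel
    exact sub_eq_zero.mp (hu.mul_left_eq_zero.mp hz)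
  have hu1 : Wᴴ * W = 1 := by rw [← hWnormal.eq, hP]
  have hWHW : Wᴴ = W := by
    calc Wᴴ = (W * W) * Wᴴ := by rw [hWW, one_mul]
      _ = W * (W * Wᴴ) := by rw [mul_assoc]
      _ = W := by rw [hP, mul_one]
  refine ⟨W, hu1, hP, hWHW, ?_⟩
  rw [hW, smul_smul, show lam * lam⁻¹ = 1 by field_simp, one_smul, hM]
  abel

end Aux

open Matrix in
theorem pseudoSpectrum_commutator_symmetric (n : ℕ)
    (A : Matrix (Fin n) (Fin n) ℂ)
    (hnormal : A * Aᴴ = Aᴴ * A)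
    (htwo : ∃ a b : ℂ, spectrum ℂ A ⊆ {a, b}) :
    ∀ B : Matrix (Fin n) (Fin n) ℂ, ∀ ε : ℝ, 0 < ε →
      pseudoSpectrum ε (A * B - B * A) = (fun z => -z) '' pseudoSpectrum ε (A * B - B * A) := by
  intro B ε hε
  obtain ⟨a, b, hab2⟩ := htwo
  obtain ⟨m, hNm⟩ := N_pow_eq_zero A a b hab2 (root_charpoly_mem_spectrum A)
  set f : ℂ →+* Matrix (Fin n) (Fin n) ℂ := (algebraMap ℂ (Matrix (Fin n) (Fin n) ℂ)) with hf
  have hcA : Commute A Aᴴ := hnormal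
  -- N is normal
  have hX1H : (A - algebraMap ℂ _ a)ᴴ = Aᴴ - algebraMap ℂ _ (starRingEnd ℂ a) := by
    rw [conjTranspose_sub, conjTranspose_algebraMap]
  have hX2H : (A - algebraMap ℂ _ b)ᴴ = Aᴴ - algebraMap ℂ _ (starRingEnd ℂ b) := by
    rw [conjTranspose_sub, conjTranspose_algebraMap]
  have hNnormal :
      Commute ((A - algebraMap ℂ _ a) * (A - algebraMap ℂ _ b))
        (((A - algebraMap ℂ _ a) * (A - algebraMap ℂ _ b))ᴴ) := by
    rw [conjTranspose_mul, hX1H, hX2H]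
    have c11 := commute_shift hcA a (starRingEnd ℂ a)
    have c12 := commute_shift hcA a (starRingEnd ℂ b)
    have c21 := commute_shift hcA b (starRingEnd ℂ a)
    have c22 := commute_shift hcA b (starRingEnd ℂ b)
    exact (c12.mul_right c11).mul_left (c22.mul_right c21)
  have hN0 : (A - algebraMap ℂ _ a) * (A - algebraMap ℂ _ b) = 0 :=
    normal_pow_eq_zero hNnormal.eq m hNm
  set Cm : Matrix (Fin n) (Fin n) ℂ := A * B - B * A with hCm
  have hWex : ∃ W : Matrix (Fin n) (Fin n) ℂ, Wᴴ * W = 1 ∧ W * Wᴴ = 1 ∧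
      ∀ z : ℂ, W * (Cm - z • (1 : Matrix (Fin n) (Fin n) ℂ)) * Wᴴ
        = -(Cm + z • (1 : Matrix (Fin n) (Fin n) ℂ)) := by
    by_cases hab : a = b
    · subst hab
      have hX1 : A - algebraMap ℂ _ a = 0 := by
        apply normal_sq_eq_zero (by rw [hX1H]; exact (commute_shift hcA a _).eq) hN0
      have hA : A = algebraMap ℂ _ a := by rwa [sub_eq_zero] at hX1
      have hC : Cm = 0 := by
        rw [hCm, hA, Algebra.commutes, sub_self]
      refine ⟨1, by simp, by simp, fun z => ?_⟩
      rw [hC]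
      simp
    · obtain ⟨W, h1, h2, h3, hA⟩ := exists_involution A hnormal a b hab hN0
      have hWW : W * W = 1 := by nth_rewrite 1 [← h3]; exact h1
      have hC : Cm = ((a - b) / 2) • (W * B - B * W) := by
        rw [hCm, hA]
        rw [add_mul, mul_add, smul_mul_assoc, mul_smul_comm, Algebra.commutes, smul_sub]
        abel
      have hWCW : W * Cm * W = -Cm := by
        rw [hC, mul_smul_comm, smul_mul_assoc, ← smul_neg]
        congr 1
        calc W * (W * B - B * W) * W = (W * W) * (B * W) - (W * B) * (W * W) := by noncomm_ring
          _ = B * W - W * B := by rw [hWW, one_mul, mul_one]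
          _ = -(W * B - B * W) := by abel
      refine ⟨W, h1, h2, fun z => ?_⟩
      rw [h3]
      calc W * (Cm - z • (1 : Matrix (Fin n) (Fin n) ℂ)) * W
          = W * Cm * W - z • (W * W) := by
            rw [mul_sub, sub_mul, mul_smul_comm, smul_mul_assoc, mul_one]
        _ = -Cm - z • (1 : Matrix (Fin n) (Fin n) ℂ) := by rw [hWCW, hWW]
        _ = -(Cm + z • (1 : Matrix (Fin n) (Fin n) ℂ)) := by abel
  obtain ⟨W, h1, h2, hconj⟩ := hWex
  have hkey : ∀ z : ℂ, sMin (Cm - z • (1 : Matrix (Fin n) (Fin n) ℂ))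
      = sMin (Cm - (-z) • (1 : Matrix (Fin n) (Fin n) ℂ)) := by
    intro z
    calc sMin (Cm - z • (1 : Matrix (Fin n) (Fin n) ℂ))
        = sMin (W * (Cm - z • (1 : Matrix (Fin n) (Fin n) ℂ)) * Wᴴ) :=
          (sMin_conj h1 h2 _).symm
      _ = sMin (-(Cm + z • (1 : Matrix (Fin n) (Fin n) ℂ))) := by rw [hconj z]
      _ = sMin (Cm + z • (1 : Matrix (Fin n) (Fin n) ℂ)) := sMin_neg _
      _ = sMin (Cm - (-z) • (1 : Matrix (Fin n) (Fin n) ℂ)) := by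
          rw [neg_smul, sub_neg_eq_add]
  ext z
  simp only [pseudoSpectrum, Set.mem_image, Set.mem_setOf_eq]
  constructor
  · intro hz
    exact ⟨-z, by rw [← hkey z]; exact hz, neg_neg z⟩
  · rintro ⟨w, hw, rfl⟩
    rw [hkey w] at hw
    exact hw
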